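/- With $A_{ij}, B_{ij}$ as in the MDD estimator, the statistic $MDD_n({\mathcal{Y}}|{\mathcal{X}})^2$ admits the representation as a fourth-order $U$-statistic: $MDD_n({\mathcal{Y}}|{\mathcal{X}})^2 = \binom{n}{4}^{-1}\sum_{i<j<q<r} h({\mathcal{Z}}_i,{\mathcal{Z}}_j,{\mathcal{Z}}_q,{\mathcal{Z}}_r)$, where $h({\mathcal{Z}}_i,{\mathcal{Z}}_j,{\mathcal{Z}}_q,{\mathcal{Z}}_r) = \frac{1}{4!}\sum_{(s,t,u,v)} (A_{st}B_{uv} + A_{st}B_{st} - 2A_{st}B_{su})$, the sum being over all $4! = 24$ permutations $(s,t,u,v)$ of $(i,j,q,r)$. -/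

import Mathlib

open Finset MeasureTheory

section Aux

variable {n : ℕ}

lemma sm_iff (w : Fin 4 → Fin n) :
    StrictMono w ↔ (w 0 < w 1 ∧ w 1 < w 2 ∧ w 2 < w 3) := by
  rw [Fin.strictMono_iff_lt_succ]
  constructor
  · intro h; exact ⟨h 0, h 1, h 2⟩
  · rintro ⟨h1, h2, h3⟩ i
    fin_cases i <;> simpa [Fin.succ, Fin.castSucc]

lemma inj_iff (w : Fin 4 → Fin n) :
    Function.Injective w ↔ (w 0 ≠ w 1 ∧ w 0 ≠ w 2 ∧ w 0 ≠ w 3 ∧ w 1 ≠ w 2 ∧ w 1 ≠ w 3 ∧ w 2 ≠ w 3) := by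
  constructor
  · intro h
    refine ⟨fun e => ?_, fun e => ?_, fun e => ?_, fun e => ?_, fun e => ?_, fun e => ?_⟩ <;>
      exact absurd (h e) (by decide)
  · rintro ⟨a,b,c,d,e,f⟩ i j hij
    fin_cases i <;> fin_cases j <;> simp_all

lemma sum_fn_eq_quad (f : Fin n → Fin n → Fin n → Fin n → ℝ) :
    ∑ w : Fin 4 → Fin n, f (w 0) (w 1) (w 2) (w 3)
      = ∑ i, ∑ j, ∑ k, ∑ r, f i j k r := by
  classical
  let e : (Fin 4 → Fin n) ≃ (Fin n × Fin n × Fin n × Fin n) :=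
    { toFun := fun w => (w 0, w 1, w 2, w 3)
      invFun := fun p => ![p.1, p.2.1, p.2.2.1, p.2.2.2]
      left_inv := fun w => by funext m; fin_cases m <;> rfl
      right_inv := fun p => rfl }
  rw [← Equiv.sum_comp e.symm (fun w : Fin 4 → Fin n => f (w 0) (w 1) (w 2) (w 3))]
  simp only [Fintype.sum_prod_type]
  rfl

noncomputable def sortFn (w : Fin 4 → Fin n) (hw : Function.Injective w) : Fin 4 → Fin n :=
  (Finset.image w Finset.univ).orderEmbOfFin
    (by rw [Finset.card_image_of_injective _ hw, Finset.card_univ, Fintype.card_fin])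

lemma sortFn_strictMono (w : Fin 4 → Fin n) (hw : Function.Injective w) :
    StrictMono (sortFn w hw) := (Finset.orderEmbOfFin _ _).strictMono

noncomputable def permOf (w : Fin 4 → Fin n) (hw : Function.Injective w) :
    Equiv.Perm (Fin 4) := by
  refine Equiv.ofBijective
    (fun i => ((Finset.image w Finset.univ).orderIsoOfFin
      (by rw [Finset.card_image_of_injective _ hw, Finset.card_univ, Fintype.card_fin])).symm
      ⟨w i, Finset.mem_image_of_mem _ (Finset.mem_univ i)⟩) ?_
  rw [Fintype.bijective_iff_injective_and_card]
  refine ⟨fun i j h => ?_, rfl⟩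
  apply hw
  have h2 := congrArg ((Finset.image w Finset.univ).orderIsoOfFin
    (by rw [Finset.card_image_of_injective _ hw, Finset.card_univ, Fintype.card_fin])) h
  simpa [Subtype.ext_iff] using h2

lemma sortFn_comp_permOf (w : Fin 4 → Fin n) (hw : Function.Injective w) :
    sortFn w hw ∘ (permOf w hw) = w := by
  funext i
  simp [sortFn, permOf, Equiv.ofBijective]
  exact congrArg Subtype.val
    (((Finset.image w Finset.univ).orderIsoOfFin _).apply_symm_apply _)

lemma sortFn_of_comp (m : Fin 4 → Fin n) (hm : StrictMono m) (σ : Equiv.Perm (Fin 4)) :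
    sortFn (m ∘ σ) (hm.injective.comp σ.injective) = m := by
  have himg : Finset.image (m ∘ σ) Finset.univ = Finset.image m Finset.univ := by
    rw [← Finset.image_image]
    congr 1
    exact Finset.image_univ_equiv σ
  unfold sortFn
  refine (Finset.orderEmbOfFin_unique _ (fun x => ?_) hm).symm
  rw [himg]; exact Finset.mem_image_of_mem _ (Finset.mem_univ x)

lemma permOf_of_comp (m : Fin 4 → Fin n) (hm : StrictMono m) (σ : Equiv.Perm (Fin 4)) :
    permOf (m ∘ σ) (hm.injective.comp σ.injective) = σ := by
  have h1 := sortFn_comp_permOf (m ∘ σ) (hm.injective.comp σ.injective)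
  rw [sortFn_of_comp m hm σ] at h1
  apply Equiv.ext
  intro i
  have := congrFun h1 i
  exact hm.injective this

lemma sum_sorted_perm (g : (Fin 4 → Fin n) → ℝ) :
    ∑ w ∈ Finset.univ.filter (fun w : Fin 4 → Fin n => StrictMono w),
      ∑ σ : Equiv.Perm (Fin 4), g (fun m => w (σ m))
    = ∑ w ∈ Finset.univ.filter (fun w : Fin 4 → Fin n => Function.Injective w), g w := by
  classical
  rw [← Finset.sum_product']
  refine Finset.sum_bij' (fun p _ => p.1 ∘ p.2)
    (fun w hw => (sortFn w (by simpa using (Finset.mem_filter.mp hw).2),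
      permOf w (by simpa using (Finset.mem_filter.mp hw).2))) ?_ ?_ ?_ ?_ ?_
  · rintro ⟨m, σ⟩ hp
    simp only [Finset.mem_product, Finset.mem_filter, Finset.mem_univ, true_and] at hp ⊢
    exact (hp.1.injective.comp σ.injective)
  · intro w hw
    simp only [Finset.mem_filter, Finset.mem_univ, true_and] at hw
    simp only [Finset.mem_product, Finset.mem_filter, Finset.mem_univ, true_and]
    exact ⟨sortFn_strictMono w hw, trivial⟩
  · rintro ⟨m, σ⟩ hp
    simp only [Finset.mem_product, Finset.mem_filter, Finset.mem_univ, true_and] at hp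
    exact Prod.ext (sortFn_of_comp m hp.1 σ) (permOf_of_comp m hp.1 σ)
  · intro w hw
    exact sortFn_comp_permOf w (by simpa using (Finset.mem_filter.mp hw).2)
  · rintro ⟨m, σ⟩ hp
    rfl

lemma sum_ite_ne1 (a : Fin n) (f : Fin n → ℝ) :
    ∑ v, (if a ≠ v then f v else 0) = (∑ v, f v) - f a := by
  have key : ∀ v, (if a ≠ v then f v else 0) = f v - (if a = v then f v else 0) := by
    intro v; by_cases h : a = v <;> simp_all
  simp only [key, Finset.sum_sub_distrib, Finset.sum_ite_eq, Finset.mem_univ, if_true]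

lemma sum_ite_ne2 {a b : Fin n} (hab : a ≠ b) (f : Fin n → ℝ) :
    ∑ v, (if a ≠ v ∧ b ≠ v then f v else 0) = (∑ v, f v) - f a - f b := by
  have key : ∀ v, (if a ≠ v ∧ b ≠ v then f v else 0)
      = f v - (if a = v then f v else 0) - (if b = v then f v else 0) := by
    intro v; by_cases h1 : a = v <;> by_cases h2 : b = v <;> simp_all
  simp only [key, Finset.sum_sub_distrib, Finset.sum_ite_eq, Finset.mem_univ, if_true]

lemma sum_ite_ne3 {a b c : Fin n} (hab : a ≠ b) (hac : a ≠ c) (hbc : b ≠ c) (f : Fin n → ℝ) :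
    ∑ v, (if a ≠ v ∧ b ≠ v ∧ c ≠ v then f v else 0) = (∑ v, f v) - f a - f b - f c := by
  have key : ∀ v, (if a ≠ v ∧ b ≠ v ∧ c ≠ v then f v else 0)
      = f v - (if a = v then f v else 0) - (if b = v then f v else 0)
          - (if c = v then f v else 0) := by
    intro v; by_cases h1 : a = v <;> by_cases h2 : b = v <;> by_cases h3 : c = v <;> simp_all
  simp only [key, Finset.sum_sub_distrib, Finset.sum_ite_eq, Finset.mem_univ, if_true]

lemma stage1 (X : Fin n → Fin n → Fin n → Fin n → ℝ) :
    (∑ s, ∑ t, ∑ u, ∑ v, if s ≠ t ∧ s ≠ u ∧ s ≠ v ∧ t ≠ u ∧ t ≠ v ∧ u ≠ v then X s t u v else 0)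
    = ∑ s, ∑ t, ∑ u, (if s ≠ t ∧ s ≠ u ∧ t ≠ u then
        (∑ v, X s t u v) - X s t u s - X s t u t - X s t u u else 0) := by
  refine Finset.sum_congr rfl fun s _ => Finset.sum_congr rfl fun t _ =>
    Finset.sum_congr rfl fun u _ => ?_
  by_cases h : s ≠ t ∧ s ≠ u ∧ t ≠ u
  · rw [if_pos h, ← sum_ite_ne3 h.1 h.2.1 h.2.2]
    refine Finset.sum_congr rfl fun v _ => if_congr (by tauto) rfl rfl
  · rw [if_neg h]
    refine Finset.sum_eq_zero fun v _ => if_neg (by tauto)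

lemma stage2 (Y : Fin n → Fin n → Fin n → ℝ) :
    (∑ s, ∑ t, ∑ u, if s ≠ t ∧ s ≠ u ∧ t ≠ u then Y s t u else 0)
    = ∑ s, ∑ t, (if s ≠ t then (∑ u, Y s t u) - Y s t s - Y s t t else 0) := by
  refine Finset.sum_congr rfl fun s _ => Finset.sum_congr rfl fun t _ => ?_
  by_cases h : s ≠ t
  · rw [if_pos h, ← sum_ite_ne2 h]
    refine Finset.sum_congr rfl fun u _ => if_congr (by tauto) rfl rfl
  · rw [if_neg h]
    refine Finset.sum_eq_zero fun u _ => if_neg (by tauto)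

lemma stage3 (W : Fin n → Fin n → ℝ) :
    (∑ s, ∑ t, if s ≠ t then W s t else 0) = ∑ s, ((∑ t, W s t) - W s s) := by
  refine Finset.sum_congr rfl fun s _ => ?_
  rw [← sum_ite_ne1 s (W s)]

lemma col_eq_row {A : Fin n → Fin n → ℝ} (hA : ∀ i j, A i j = A j i) (s : Fin n) :
    (∑ u, A u s) = ∑ u, A s u :=
  Finset.sum_congr rfl fun u _ => hA u s

lemma trans_eq (A B : Fin n → Fin n → ℝ) (hB : ∀ i j, B i j = B j i) :
    (∑ s, ∑ t, (A s t * B t s)) = ∑ s, ∑ t, (A s t * B s t) :=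
  Finset.sum_congr rfl fun s _ => Finset.sum_congr rfl fun t _ => by rw [hB t s]

lemma colfix1 (A B : Fin n → Fin n → ℝ) (hB : ∀ i j, B i j = B j i) :
    (∑ x, ((∑ i, A x i) * ∑ i, B i x)) = ∑ x, ((∑ i, A x i) * ∑ i, B x i) :=
  Finset.sum_congr rfl fun x _ => by rw [col_eq_row hB]

lemma colfix2 (A B : Fin n → Fin n → ℝ) (hB : ∀ i j, B i j = B j i) :
    (∑ x, ∑ y, (A x y * ∑ i, B i y)) = ∑ x, ∑ y, (A x y * ∑ i, B y i) :=
  Finset.sum_congr rfl fun x _ => Finset.sum_congr rfl fun y _ => by rw [col_eq_row hB]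

lemma mix_eq (A B : Fin n → Fin n → ℝ) (hA : ∀ i j, A i j = A j i) :
    (∑ s, ∑ t, (A s t * ∑ v, B t v)) = ∑ s, ((∑ t, A s t) * (∑ t, B s t)) := by
  rw [Finset.sum_comm]
  refine Finset.sum_congr rfl fun t _ => ?_
  rw [← Finset.sum_mul]
  congr 1
  exact col_eq_row hA t

lemma mix_eq2 (A B : Fin n → Fin n → ℝ) (hB : ∀ i j, B i j = B j i) :
    (∑ i, ∑ j, ((∑ l, A j l) * B i j)) = ∑ i, ((∑ j, A i j) * (∑ j, B i j)) := by
  rw [Finset.sum_comm]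
  refine Finset.sum_congr rfl fun j _ => ?_
  rw [← Finset.mul_sum, col_eq_row hB]

lemma rhs_main (A B : Fin n → Fin n → ℝ)
    (hA : ∀ i j, A i j = A j i) (hA0 : ∀ i, A i i = 0)
    (hB : ∀ i j, B i j = B j i) (hB0 : ∀ i, B i i = 0) :
    (∑ s, ∑ t, ∑ u, ∑ v, if s ≠ t ∧ s ≠ u ∧ s ≠ v ∧ t ≠ u ∧ t ≠ v ∧ u ≠ v then
        A s t * B u v + A s t * B s t - 2 * (A s t * B s u) else 0)
    = (∑ i, ∑ j, A i j) * (∑ i, ∑ j, B i j)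
      - 2 * ((n : ℝ) - 1) * (∑ i, (∑ j, A i j) * (∑ j, B i j))
      + ((n : ℝ) - 1) * ((n : ℝ) - 2) * (∑ i, ∑ j, A i j * B i j) := by
  rw [stage1, stage2 (fun s t u => (∑ v, (A s t * B u v + A s t * B s t - 2 * (A s t * B s u)))
        - (A s t * B u s + A s t * B s t - 2 * (A s t * B s u))
        - (A s t * B u t + A s t * B s t - 2 * (A s t * B s u))
        - (A s t * B u u + A s t * B s t - 2 * (A s t * B s u))),
      stage3]
  simp only [hA0, hB0, zero_mul, mul_zero, sub_zero, zero_sub, neg_zero, zero_add, add_zero,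
    Finset.sum_const_zero, Finset.sum_sub_distrib, Finset.sum_add_distrib,
    Finset.sum_const, Finset.card_univ, Fintype.card_fin, nsmul_eq_mul,
    col_eq_row hB]
  simp only [← Finset.mul_sum, ← Finset.sum_mul, Finset.sum_sub_distrib, Finset.sum_add_distrib]
  linear_combination (-2 : ℝ) * mix_eq A B hA + trans_eq A B hB
    - colfix1 A B hB - colfix2 A B hB

set_option maxHeartbeats 2000000 in
lemma lhs_main (A B : Fin n → Fin n → ℝ)
    (hA : ∀ i j, A i j = A j i) (hA0 : ∀ i, A i i = 0)
    (hB : ∀ i j, B i j = B j i) (hB0 : ∀ i, B i i = 0)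
    (hd : ((n:ℝ)-1) ≠ 0) (hc : ((n:ℝ)-2) ≠ 0) :
    (∑ i, ((∑ j, (A i j - (∑ l, A i l)/((n:ℝ)-2) - (∑ l, A j l)/((n:ℝ)-2)
            + (∑ k, ∑ l, A k l)/(((n:ℝ)-1)*((n:ℝ)-2)))
        * (B i j - (∑ l, B i l)/((n:ℝ)-2) - (∑ l, B j l)/((n:ℝ)-2)
            + (∑ k, ∑ l, B k l)/(((n:ℝ)-1)*((n:ℝ)-2))))
      - (A i i - (∑ l, A i l)/((n:ℝ)-2) - (∑ l, A i l)/((n:ℝ)-2)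
            + (∑ k, ∑ l, A k l)/(((n:ℝ)-1)*((n:ℝ)-2)))
        * (B i i - (∑ l, B i l)/((n:ℝ)-2) - (∑ l, B i l)/((n:ℝ)-2)
            + (∑ k, ∑ l, B k l)/(((n:ℝ)-1)*((n:ℝ)-2)))))
    = (∑ i, ∑ j, A i j * B i j)
      - 2/((n:ℝ)-2) * (∑ i, (∑ j, A i j) * (∑ j, B i j))
      + ((∑ i, ∑ j, A i j) * (∑ i, ∑ j, B i j))/(((n:ℝ)-1)*((n:ℝ)-2)) := by
  have hexp : ∀ i j : Fin n,
      (A i j - (∑ l, A i l)/((n:ℝ)-2) - (∑ l, A j l)/((n:ℝ)-2)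
          + (∑ k, ∑ l, A k l)/(((n:ℝ)-1)*((n:ℝ)-2)))
        * (B i j - (∑ l, B i l)/((n:ℝ)-2) - (∑ l, B j l)/((n:ℝ)-2)
          + (∑ k, ∑ l, B k l)/(((n:ℝ)-1)*((n:ℝ)-2)))
      = A i j * B i j
        + (-(((n:ℝ)-2)⁻¹)) * (A i j * (∑ l, B j l))
        + (-(((n:ℝ)-2)⁻¹)) * ((∑ l, A j l) * B i j)
        + (((n:ℝ)-2)⁻¹ * ((n:ℝ)-2)⁻¹) * ((∑ l, A j l) * (∑ l, B j l))
        + (-(∑ l, B i l)/((n:ℝ)-2) + (∑ k, ∑ l, B k l)/(((n:ℝ)-1)*((n:ℝ)-2))) * A i j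
        + (-(∑ l, A i l)/((n:ℝ)-2) + (∑ k, ∑ l, A k l)/(((n:ℝ)-1)*((n:ℝ)-2))) * B i j
        + ((-(((n:ℝ)-2)⁻¹)) * (-(∑ l, B i l)/((n:ℝ)-2)
            + (∑ k, ∑ l, B k l)/(((n:ℝ)-1)*((n:ℝ)-2)))) * (∑ l, A j l)
        + ((-(((n:ℝ)-2)⁻¹)) * (-(∑ l, A i l)/((n:ℝ)-2)
            + (∑ k, ∑ l, A k l)/(((n:ℝ)-1)*((n:ℝ)-2)))) * (∑ l, B j l)
        + (-(∑ l, A i l)/((n:ℝ)-2) + (∑ k, ∑ l, A k l)/(((n:ℝ)-1)*((n:ℝ)-2)))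
          * (-(∑ l, B i l)/((n:ℝ)-2) + (∑ k, ∑ l, B k l)/(((n:ℝ)-1)*((n:ℝ)-2))) := by
    intro i j; ring
  simp only [hexp, hA0, hB0]
  simp only [zero_mul, mul_zero, sub_zero, zero_sub, neg_zero, zero_add, add_zero,
    Finset.sum_const_zero, Finset.sum_sub_distrib, Finset.sum_add_distrib,
    Finset.sum_const, Finset.card_univ, Fintype.card_fin, nsmul_eq_mul]
  have hfixB : ∀ x : Fin n, (-∑ l, B x l)/((n:ℝ)-2) = (-(((n:ℝ)-2)⁻¹)) * ∑ l, B x l := by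
    intro x; ring
  have hfixA : ∀ x : Fin n, (-∑ l, A x l)/((n:ℝ)-2) = (-(((n:ℝ)-2)⁻¹)) * ∑ l, A x l := by
    intro x; ring
  have hfix1 : ∀ x : Fin n,
      ((-∑ l, B x l)/((n:ℝ)-2) + (∑ k, ∑ l, B k l)/(((n:ℝ)-1)*((n:ℝ)-2))) * (∑ i, A x i)
      = (-(((n:ℝ)-2)⁻¹)) * ((∑ i, A x i) * (∑ l, B x l))
        + ((∑ k, ∑ l, B k l) * (((n:ℝ)-1)⁻¹*((n:ℝ)-2)⁻¹)) * (∑ i, A x i) := by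
    intro x; field_simp
  have hfix2 : ∀ x : Fin n,
      ((-∑ l, A x l)/((n:ℝ)-2) + (∑ k, ∑ l, A k l)/(((n:ℝ)-1)*((n:ℝ)-2))) * (∑ i, B x i)
      = (-(((n:ℝ)-2)⁻¹)) * ((∑ i, A x i) * (∑ i, B x i))
        + ((∑ k, ∑ l, A k l) * (((n:ℝ)-1)⁻¹*((n:ℝ)-2)⁻¹)) * (∑ i, B x i) := by
    intro x; field_simp
  have hfix3 : ∀ x : Fin n,
      ((-∑ l, A x l)/((n:ℝ)-2) + (∑ k, ∑ l, A k l)/(((n:ℝ)-1)*((n:ℝ)-2)))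
        * ((-∑ l, B x l)/((n:ℝ)-2) + (∑ k, ∑ l, B k l)/(((n:ℝ)-1)*((n:ℝ)-2)))
      = (((n:ℝ)-2)⁻¹*((n:ℝ)-2)⁻¹) * ((∑ l, A x l) * (∑ l, B x l))
        + (-((∑ k, ∑ l, B k l) * (((n:ℝ)-1)⁻¹*(((n:ℝ)-2)⁻¹*((n:ℝ)-2)⁻¹)))) * (∑ l, A x l)
        + (-((∑ k, ∑ l, A k l) * (((n:ℝ)-1)⁻¹*(((n:ℝ)-2)⁻¹*((n:ℝ)-2)⁻¹)))) * (∑ l, B x l)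
        + (∑ k, ∑ l, A k l) * (∑ k, ∑ l, B k l)
            * (((n:ℝ)-1)⁻¹*((n:ℝ)-1)⁻¹*(((n:ℝ)-2)⁻¹*((n:ℝ)-2)⁻¹)) := by
    intro x; field_simp; ring
  have hfix4 : ∀ x : Fin n,
      (-((∑ l, A x l)/((n:ℝ)-2)) - (∑ l, A x l)/((n:ℝ)-2)
          + (∑ k, ∑ l, A k l)/(((n:ℝ)-1)*((n:ℝ)-2)))
        * (-((∑ l, B x l)/((n:ℝ)-2)) - (∑ l, B x l)/((n:ℝ)-2)
          + (∑ k, ∑ l, B k l)/(((n:ℝ)-1)*((n:ℝ)-2)))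
      = (4*(((n:ℝ)-2)⁻¹*((n:ℝ)-2)⁻¹)) * ((∑ l, A x l) * (∑ l, B x l))
        + (-(2*((∑ k, ∑ l, B k l) * (((n:ℝ)-1)⁻¹*(((n:ℝ)-2)⁻¹*((n:ℝ)-2)⁻¹))))) * (∑ l, A x l)
        + (-(2*((∑ k, ∑ l, A k l) * (((n:ℝ)-1)⁻¹*(((n:ℝ)-2)⁻¹*((n:ℝ)-2)⁻¹))))) * (∑ l, B x l)
        + (∑ k, ∑ l, A k l) * (∑ k, ∑ l, B k l)
            * (((n:ℝ)-1)⁻¹*((n:ℝ)-1)⁻¹*(((n:ℝ)-2)⁻¹*((n:ℝ)-2)⁻¹)) := by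
    intro x; field_simp; ring
  simp only [Finset.sum_sub_distrib, Finset.sum_add_distrib, ← Finset.mul_sum, ← Finset.sum_mul,
    Finset.sum_const, Finset.card_univ, Fintype.card_fin, nsmul_eq_mul]
  simp only [hfix1, hfix2, hfix3, hfix4]
  simp only [hfixA, hfixB]
  simp only [Finset.sum_sub_distrib, Finset.sum_add_distrib, ← Finset.mul_sum, ← Finset.sum_mul,
    Finset.sum_const, Finset.card_univ, Fintype.card_fin, nsmul_eq_mul]
  rw [mix_eq A B hA, mix_eq2 A B hB]
  generalize (∑ i : Fin n, ∑ j : Fin n, A i j * B i j) = t1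
  generalize (∑ i : Fin n, (∑ j : Fin n, A i j) * ∑ j : Fin n, B i j) = t2
  generalize (∑ i : Fin n, ∑ j : Fin n, A i j) = sa
  generalize (∑ i : Fin n, ∑ j : Fin n, B i j) = sb
  field_simp
  ring

end Aux

/-- The `𝒰`-centered version of an `n × n` matrix `B`. -/
noncomputable def ucenter (n : ℕ) (B : Fin n → Fin n → ℝ) : Fin n → Fin n → ℝ :=
  fun i j =>
    if i = j then 0
    else
      B i j - (∑ l, B i l) / ((n : ℝ) - 2) - (∑ k, B k j) / ((n : ℝ) - 2)
        + (∑ k, ∑ l, B k l) / (((n : ℝ) - 1) * ((n : ℝ) - 2))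

/-- The symmetric fourth-order kernel `h` of `MDD_n(𝒴|𝒳)²`:
`h(z₁,z₂,z₃,z₄) = (1/4!) ∑_{(s,t,u,v)} (A_{st}B_{uv} + A_{st}B_{st} - 2 A_{st}B_{su})`,
the sum being over all 24 permutations of the four points. -/
noncomputable def hker {q : ℕ} (z1 z2 z3 z4 : EuclideanSpace ℝ (Fin q) × ℝ) : ℝ :=
  (1 / 24 : ℝ) * ∑ σ : Equiv.Perm (Fin 4),
    (fun w : Fin 4 → EuclideanSpace ℝ (Fin q) × ℝ =>
        ‖(w 0).1 - (w 1).1‖ * (|(w 2).2 - (w 3).2| ^ 2 / 2)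
          + ‖(w 0).1 - (w 1).1‖ * (|(w 0).2 - (w 1).2| ^ 2 / 2)
          - 2 * (‖(w 0).1 - (w 1).1‖ * (|(w 0).2 - (w 2).2| ^ 2 / 2)))
      (fun m => ![z1, z2, z3, z4] (σ m))

/-- `MDD_n(𝒴|𝒳)²` is a fourth-order `U`-statistic with kernel `h`. -/
theorem stmt3 (q n : ℕ) (hn : 4 ≤ n)
    (Z : Fin n → EuclideanSpace ℝ (Fin q) × ℝ) :
    (1 / ((n : ℝ) * ((n : ℝ) - 3))) *
        ∑ i, ∑ j ∈ Finset.univ.filter (fun j => j ≠ i),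
          ucenter n (fun k l => ‖(Z k).1 - (Z l).1‖) i j *
            ucenter n (fun k l => |(Z k).2 - (Z l).2| ^ 2 / 2) i j
      = ((n.choose 4 : ℝ))⁻¹ *
          ∑ i, ∑ j ∈ Finset.univ.filter (fun j => i < j),
            ∑ k ∈ Finset.univ.filter (fun k => j < k),
              ∑ r ∈ Finset.univ.filter (fun r => k < r),
                hker (Z i) (Z j) (Z k) (Z r) := by
  classical
  set A : Fin n → Fin n → ℝ := fun k l => ‖(Z k).1 - (Z l).1‖ with hAdef
  set B : Fin n → Fin n → ℝ := fun k l => |(Z k).2 - (Z l).2| ^ 2 / 2 with hBdef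
  have hA : ∀ i j, A i j = A j i := fun i j => by simp only [hAdef]; rw [norm_sub_rev]
  have hA0 : ∀ i, A i i = 0 := fun i => by simp [hAdef]
  have hB : ∀ i j, B i j = B j i := fun i j => by simp only [hBdef]; rw [abs_sub_comm]
  have hB0 : ∀ i, B i i = 0 := fun i => by simp [hBdef]
  have h4 : (4:ℝ) ≤ (n:ℝ) := by exact_mod_cast hn
  have hn0 : (n:ℝ) ≠ 0 := by linarith
  have hd : ((n:ℝ)-1) ≠ 0 := by linarith
  have hc : ((n:ℝ)-2) ≠ 0 := by linarith
  have h3 : ((n:ℝ)-3) ≠ 0 := by linarith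
  -- LHS
  have stageL : ∀ Q : Fin n → Fin n → ℝ,
      (∑ i, ∑ j, if i = j then 0 else Q i j) = ∑ i, ((∑ j, Q i j) - Q i i) := by
    intro Q
    refine Finset.sum_congr rfl fun i _ => ?_
    have key : ∀ j, (if i = j then (0:ℝ) else Q i j)
        = Q i j - (if i = j then Q i j else 0) := by
      intro j; by_cases h : i = j <;> simp [h]
    simp only [key, Finset.sum_sub_distrib, Finset.sum_ite_eq, Finset.mem_univ, if_true]
  have hprod : ∀ i j : Fin n, ucenter n A i j * ucenter n B i j
      = if i = j then 0 else
        ((A i j - (∑ l, A i l)/((n:ℝ)-2) - (∑ l, A j l)/((n:ℝ)-2)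
            + (∑ k, ∑ l, A k l)/(((n:ℝ)-1)*((n:ℝ)-2)))
         * (B i j - (∑ l, B i l)/((n:ℝ)-2) - (∑ l, B j l)/((n:ℝ)-2)
            + (∑ k, ∑ l, B k l)/(((n:ℝ)-1)*((n:ℝ)-2)))) := by
    intro i j
    by_cases h : i = j
    · simp [ucenter, h]
    · simp only [ucenter, if_neg h]
      rw [col_eq_row hA j, col_eq_row hB j]
  have hLHS : (∑ i, ∑ j ∈ Finset.univ.filter (fun j => j ≠ i),
        ucenter n A i j * ucenter n B i j)
      = (∑ i, ∑ j, A i j * B i j)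
        - 2/((n:ℝ)-2) * (∑ i, (∑ j, A i j) * (∑ j, B i j))
        + ((∑ i, ∑ j, A i j) * (∑ i, ∑ j, B i j))/(((n:ℝ)-1)*((n:ℝ)-2)) := by
    rw [← lhs_main A B hA hA0 hB hB0 hd hc]
    have h1 : ∀ i : Fin n,
        (∑ j ∈ Finset.univ.filter (fun j => j ≠ i), ucenter n A i j * ucenter n B i j)
        = ∑ j, ucenter n A i j * ucenter n B i j := by
      intro i
      rw [Finset.filter_ne', Finset.sum_erase_eq_sub (Finset.mem_univ i)]
      have : ucenter n A i i * ucenter n B i i = 0 := by simp [ucenter]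
      rw [this, sub_zero]
    calc (∑ i, ∑ j ∈ Finset.univ.filter (fun j => j ≠ i),
            ucenter n A i j * ucenter n B i j)
        = ∑ i, ∑ j, ucenter n A i j * ucenter n B i j :=
          Finset.sum_congr rfl fun i _ => h1 i
      _ = ∑ i : Fin n, ∑ j : Fin n, (if i = j then 0 else
            ((A i j - (∑ l, A i l)/((n:ℝ)-2) - (∑ l, A j l)/((n:ℝ)-2)
                + (∑ k, ∑ l, A k l)/(((n:ℝ)-1)*((n:ℝ)-2)))
             * (B i j - (∑ l, B i l)/((n:ℝ)-2) - (∑ l, B j l)/((n:ℝ)-2)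
                + (∑ k, ∑ l, B k l)/(((n:ℝ)-1)*((n:ℝ)-2))))) :=
          Finset.sum_congr rfl fun i _ => Finset.sum_congr rfl fun j _ => hprod i j
      _ = _ := by rw [stageL]
  -- RHS
  have hw4 : ∀ w : Fin 4 → Fin n, (![w 0, w 1, w 2, w 3] : Fin 4 → Fin n) = w := by
    intro w; funext m; fin_cases m <;> rfl
  have h24ker : ∀ w : Fin 4 → Fin n, hker (Z (w 0)) (Z (w 1)) (Z (w 2)) (Z (w 3))
      = (1/24 : ℝ) * ∑ σ : Equiv.Perm (Fin 4),
          (A (w (σ 0)) (w (σ 1)) * B (w (σ 2)) (w (σ 3))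
            + A (w (σ 0)) (w (σ 1)) * B (w (σ 0)) (w (σ 1))
            - 2 * (A (w (σ 0)) (w (σ 1)) * B (w (σ 0)) (w (σ 2)))) := by
    intro w
    have hv : ∀ m : Fin 4, ![Z (w 0), Z (w 1), Z (w 2), Z (w 3)] m = Z (w m) := by
      intro m; fin_cases m <;> rfl
    simp only [hker, hv, hAdef, hBdef]
  have hRHS : (∑ i, ∑ j ∈ Finset.univ.filter (fun j => i < j),
        ∑ k ∈ Finset.univ.filter (fun k => j < k),
          ∑ r ∈ Finset.univ.filter (fun r => k < r), hker (Z i) (Z j) (Z k) (Z r))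
      = (1/24 : ℝ) * ((∑ i, ∑ j, A i j) * (∑ i, ∑ j, B i j)
          - 2 * ((n : ℝ) - 1) * (∑ i, (∑ j, A i j) * (∑ j, B i j))
          + ((n : ℝ) - 1) * ((n : ℝ) - 2) * (∑ i, ∑ j, A i j * B i j)) := by
    have step1 : (∑ i, ∑ j ∈ Finset.univ.filter (fun j => i < j),
          ∑ k ∈ Finset.univ.filter (fun k => j < k),
            ∑ r ∈ Finset.univ.filter (fun r => k < r), hker (Z i) (Z j) (Z k) (Z r))
        = ∑ i, ∑ j, ∑ k, ∑ r, (if i < j ∧ j < k ∧ k < r then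
            hker (Z i) (Z j) (Z k) (Z r) else 0) := by
      refine Finset.sum_congr rfl fun i _ => ?_
      rw [Finset.sum_filter]
      refine Finset.sum_congr rfl fun j _ => ?_
      by_cases h1 : i < j
      · rw [if_pos h1, Finset.sum_filter]
        refine Finset.sum_congr rfl fun k _ => ?_
        by_cases h2 : j < k
        · rw [if_pos h2, Finset.sum_filter]
          refine Finset.sum_congr rfl fun r _ => ?_
          by_cases h3 : k < r
          · rw [if_pos h3, if_pos ⟨h1, h2, h3⟩]
          · rw [if_neg h3, if_neg (by tauto)]
        · rw [if_neg h2]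
          exact (Finset.sum_eq_zero fun r _ => if_neg (by tauto)).symm
      · rw [if_neg h1]
        exact (Finset.sum_eq_zero fun k _ =>
          Finset.sum_eq_zero fun r _ => if_neg (by tauto)).symm
    have step2 : (∑ i, ∑ j, ∑ k, ∑ r, (if i < j ∧ j < k ∧ k < r then
          hker (Z i) (Z j) (Z k) (Z r) else 0))
        = ∑ w : Fin 4 → Fin n, (if w 0 < w 1 ∧ w 1 < w 2 ∧ w 2 < w 3 then
            (1/24 : ℝ) * ∑ σ : Equiv.Perm (Fin 4),
              (A (w (σ 0)) (w (σ 1)) * B (w (σ 2)) (w (σ 3))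
                + A (w (σ 0)) (w (σ 1)) * B (w (σ 0)) (w (σ 1))
                - 2 * (A (w (σ 0)) (w (σ 1)) * B (w (σ 0)) (w (σ 2)))) else 0) := by
      rw [(sum_fn_eq_quad (fun i j k r => (if i < j ∧ j < k ∧ k < r then
            hker (Z i) (Z j) (Z k) (Z r) else 0))).symm]
      refine Finset.sum_congr rfl fun w _ => ?_
      exact if_congr Iff.rfl (h24ker w) rfl
    calc (∑ i, ∑ j ∈ Finset.univ.filter (fun j => i < j),
          ∑ k ∈ Finset.univ.filter (fun k => j < k),
            ∑ r ∈ Finset.univ.filter (fun r => k < r), hker (Z i) (Z j) (Z k) (Z r))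
        = ∑ w : Fin 4 → Fin n, (if w 0 < w 1 ∧ w 1 < w 2 ∧ w 2 < w 3 then
            (1/24 : ℝ) * ∑ σ : Equiv.Perm (Fin 4),
              (A (w (σ 0)) (w (σ 1)) * B (w (σ 2)) (w (σ 3))
                + A (w (σ 0)) (w (σ 1)) * B (w (σ 0)) (w (σ 1))
                - 2 * (A (w (σ 0)) (w (σ 1)) * B (w (σ 0)) (w (σ 2)))) else 0) := by
          rw [step1, step2]
      _ = ∑ w ∈ Finset.univ.filter
            (fun w : Fin 4 → Fin n => w 0 < w 1 ∧ w 1 < w 2 ∧ w 2 < w 3),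
            ((1/24 : ℝ) * ∑ σ : Equiv.Perm (Fin 4),
              (A (w (σ 0)) (w (σ 1)) * B (w (σ 2)) (w (σ 3))
                + A (w (σ 0)) (w (σ 1)) * B (w (σ 0)) (w (σ 1))
                - 2 * (A (w (σ 0)) (w (σ 1)) * B (w (σ 0)) (w (σ 2))))) :=
          (Finset.sum_filter _ _).symm
      _ = (1/24 : ℝ) * ∑ w ∈ Finset.univ.filter
            (fun w : Fin 4 → Fin n => w 0 < w 1 ∧ w 1 < w 2 ∧ w 2 < w 3),
            ∑ σ : Equiv.Perm (Fin 4),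
              (A (w (σ 0)) (w (σ 1)) * B (w (σ 2)) (w (σ 3))
                + A (w (σ 0)) (w (σ 1)) * B (w (σ 0)) (w (σ 1))
                - 2 * (A (w (σ 0)) (w (σ 1)) * B (w (σ 0)) (w (σ 2)))) := by
          rw [Finset.mul_sum]
      _ = (1/24 : ℝ) * ∑ w ∈ Finset.univ.filter
            (fun w : Fin 4 → Fin n => StrictMono w),
            ∑ σ : Equiv.Perm (Fin 4),
              (A (w (σ 0)) (w (σ 1)) * B (w (σ 2)) (w (σ 3))
                + A (w (σ 0)) (w (σ 1)) * B (w (σ 0)) (w (σ 1))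
                - 2 * (A (w (σ 0)) (w (σ 1)) * B (w (σ 0)) (w (σ 2)))) := by
          congr 1
          apply Finset.sum_congr _ (fun w _ => rfl)
          exact Finset.filter_congr (fun w _ => (sm_iff w).symm)
      _ = (1/24 : ℝ) * ∑ w ∈ Finset.univ.filter
            (fun w : Fin 4 → Fin n => Function.Injective w),
            (A (w 0) (w 1) * B (w 2) (w 3)
              + A (w 0) (w 1) * B (w 0) (w 1)
              - 2 * (A (w 0) (w 1) * B (w 0) (w 2))) := by
          congr 1
          exact sum_sorted_perm (fun v => A (v 0) (v 1) * B (v 2) (v 3)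
            + A (v 0) (v 1) * B (v 0) (v 1) - 2 * (A (v 0) (v 1) * B (v 0) (v 2)))
      _ = (1/24 : ℝ) * ∑ w : Fin 4 → Fin n, (if Function.Injective w then
            (A (w 0) (w 1) * B (w 2) (w 3)
              + A (w 0) (w 1) * B (w 0) (w 1)
              - 2 * (A (w 0) (w 1) * B (w 0) (w 2))) else 0) := by
          rw [Finset.sum_filter]
      _ = (1/24 : ℝ) * ∑ w : Fin 4 → Fin n,
            (if w 0 ≠ w 1 ∧ w 0 ≠ w 2 ∧ w 0 ≠ w 3 ∧ w 1 ≠ w 2 ∧ w 1 ≠ w 3 ∧ w 2 ≠ w 3 then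
            (A (w 0) (w 1) * B (w 2) (w 3)
              + A (w 0) (w 1) * B (w 0) (w 1)
              - 2 * (A (w 0) (w 1) * B (w 0) (w 2))) else 0) := by
          congr 1
          exact Finset.sum_congr rfl fun w _ => if_congr (inj_iff w) rfl rfl
      _ = (1/24 : ℝ) * ∑ s, ∑ t, ∑ u, ∑ v,
            (if s ≠ t ∧ s ≠ u ∧ s ≠ v ∧ t ≠ u ∧ t ≠ v ∧ u ≠ v then
              A s t * B u v + A s t * B s t - 2 * (A s t * B s u) else 0) := by
          congr 1
          exact sum_fn_eq_quad (fun s t u v =>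
            (if s ≠ t ∧ s ≠ u ∧ s ≠ v ∧ t ≠ u ∧ t ≠ v ∧ u ≠ v then
              A s t * B u v + A s t * B s t - 2 * (A s t * B s u) else 0))
      _ = _ := by rw [rhs_main A B hA hA0 hB hB0]
  rw [hLHS, hRHS]
  -- final scalar computation
  obtain ⟨m, rfl⟩ := Nat.exists_eq_add_of_le hn
  have h1 : 24 * ((4+m).choose 4) = (m+1)*(m+2)*(m+3)*(m+4) := by
    have hdf : (4 + m).descFactorial 4 = 24 * ((4 + m).choose 4) := by
      rw [Nat.descFactorial_eq_factorial_mul_choose]; norm_num [Nat.factorial]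
    rw [← hdf]
    have e1 : 4 + m - 3 = m + 1 := by omega
    have e2 : 4 + m - 2 = m + 2 := by omega
    have e3 : 4 + m - 1 = m + 3 := by omega
    simp [Nat.descFactorial, e1, e2, e3]
    ring_nf
  have h2 : (((4+m).choose 4 : ℕ) : ℝ) * 24
      = ((m:ℝ)+1)*((m:ℝ)+2)*((m:ℝ)+3)*((m:ℝ)+4) := by
    have := congrArg (fun x : ℕ => (x:ℝ)) h1
    push_cast at this
    linarith
  have hch : (((4+m).choose 4 : ℕ) : ℝ)
      = ((m:ℝ)+1)*((m:ℝ)+2)*((m:ℝ)+3)*((m:ℝ)+4)/24 := by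
    rw [eq_div_iff (by norm_num)]
    linarith
  rw [hch]
  generalize (∑ i : Fin (4+m), ∑ j : Fin (4+m), A i j * B i j) = t1
  generalize (∑ i : Fin (4+m), (∑ j : Fin (4+m), A i j) * ∑ j : Fin (4+m), B i j) = t2
  generalize (∑ i : Fin (4+m), ∑ j : Fin (4+m), A i j) = sa
  generalize (∑ i : Fin (4+m), ∑ j : Fin (4+m), B i j) = sb
  have em1 : ((4+m:ℕ):ℝ) - 1 = (m:ℝ)+3 := by push_cast; ring
  have em2 : ((4+m:ℕ):ℝ) - 2 = (m:ℝ)+2 := by push_cast; ring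
  have em3 : ((4+m:ℕ):ℝ) - 3 = (m:ℝ)+1 := by push_cast; ring
  have em0 : ((4+m:ℕ):ℝ) = (m:ℝ)+4 := by push_cast; ring
  rw [em1, em2, em3, em0]
  have k1 : (m:ℝ)+4 ≠ 0 := by positivity
  have k2 : (m:ℝ)+1 ≠ 0 := by positivity
  have k3 : (m:ℝ)+2 ≠ 0 := by positivity
  have k4 : (m:ℝ)+3 ≠ 0 := by positivity
  field_simp
  ring
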